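/- Let Q₃ be a quadratic form on ℝ^{3×3} that is positive semidefinite, positive definite on Sym(3), and vanishes on Skew(3). Define Q₂(G) = min_{d ∈ ℝ³} Q₃(Ĝ + d ⊗ f₃) for G ∈ ℝ^{2×2}. Then Q₂ is a quadratic form on ℝ^{2×2}, positive semidefinite, positive definite on Sym(2), vanishing on Skew(2), and Q₃(F) ≥ Q₂(F̌) for every F ∈ ℝ^{3×3}, where F̌ is the upper-left 2×2 submatrix of F. -/

import Mathlib

open Matrix

namespace Stmt18Aux

noncomputable section

/-- the linear map `d ↦ d ⊗ f₃` -/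
def Lmap : (Fin 3 → ℝ) →ₗ[ℝ] Matrix (Fin 3) (Fin 3) ℝ where
  toFun d := Matrix.of fun i j => if j = 2 then d i else 0
  map_add' d e := by ext i j; by_cases h : j = (2 : Fin 3) <;> simp [h]
  map_smul' c d := by ext i j; by_cases h : j = (2 : Fin 3) <;> simp [h]

/-- the linear map `G ↦ Ĝ` -/
def hatL : Matrix (Fin 2) (Fin 2) ℝ →ₗ[ℝ] Matrix (Fin 3) (Fin 3) ℝ where
  toFun G := Matrix.of fun i j =>
    if hi : (i : ℕ) < 2 then (if hj : (j : ℕ) < 2 then G ⟨i, hi⟩ ⟨j, hj⟩ else 0) else 0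
  map_add' G H := by ext i j; dsimp; split_ifs <;> simp
  map_smul' c G := by ext i j; dsimp; split_ifs <;> simp

theorem polar_eq_zero {M : Type*} [AddCommGroup M] [Module ℝ M]
    (Q : QuadraticForm ℝ M) (hpsd : ∀ x, 0 ≤ Q x) {y : M} (hy : Q y = 0) (x : M) :
    QuadraticMap.polar Q x y = 0 := by
  by_contra hp
  have key : ∀ t : ℝ, 0 ≤ Q x + t * QuadraticMap.polar Q x y := by
    intro t
    have h1 : Q (x + t • y) = Q x + t * QuadraticMap.polar Q x y := by
      have e1 : Q (x + t • y) = Q x + Q (t • y) + QuadraticMap.polar Q x (t • y) := by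
        simp [QuadraticMap.polar]
      rw [e1, QuadraticMap.polar_smul_right, QuadraticMap.map_smul, hy]
      simp [smul_eq_mul]
    rw [← h1]; exact hpsd _
  have := key (-(Q x + 1) / QuadraticMap.polar Q x y)
  rw [div_mul_cancel₀ _ hp] at this
  linarith

theorem Q_add_skew (Q3 : QuadraticForm ℝ (Matrix (Fin 3) (Fin 3) ℝ))
    (hpsd : ∀ F, 0 ≤ Q3 F)
    (hskew : ∀ F : Matrix (Fin 3) (Fin 3) ℝ, Fᵀ = -F → Q3 F = 0)
    (S W : Matrix (Fin 3) (Fin 3) ℝ) (hW : Wᵀ = -W) :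
    Q3 (S + W) = Q3 S := by
  have h0 : Q3 W = 0 := hskew W hW
  have hp := polar_eq_zero Q3 hpsd h0 S
  have e : Q3 (S + W) = Q3 S + Q3 W + QuadraticMap.polar Q3 S W := by
    simp [QuadraticMap.polar]
  rw [e, h0, hp]; ring

theorem Q_sym (Q3 : QuadraticForm ℝ (Matrix (Fin 3) (Fin 3) ℝ))
    (hpsd : ∀ F, 0 ≤ Q3 F)
    (hskew : ∀ F : Matrix (Fin 3) (Fin 3) ℝ, Fᵀ = -F → Q3 F = 0)
    (X : Matrix (Fin 3) (Fin 3) ℝ) :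
    Q3 X = Q3 ((2⁻¹ : ℝ) • (X + Xᵀ)) := by
  have hd : X = (2⁻¹ : ℝ) • (X + Xᵀ) + (2⁻¹ : ℝ) • (X - Xᵀ) := by
    rw [← smul_add]; module
  have hW : ((2⁻¹ : ℝ) • (X - Xᵀ))ᵀ = -((2⁻¹ : ℝ) • (X - Xᵀ)) := by
    simp [transpose_smul, transpose_sub, smul_sub]
  calc Q3 X = Q3 ((2⁻¹ : ℝ) • (X + Xᵀ) + (2⁻¹ : ℝ) • (X - Xᵀ)) := by rw [← hd]
    _ = Q3 ((2⁻¹ : ℝ) • (X + Xᵀ)) := Q_add_skew Q3 hpsd hskew _ _ hW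

variable (Q3 : QuadraticForm ℝ (Matrix (Fin 3) (Fin 3) ℝ))

/-- the quadratic form `d ↦ Q₃(d ⊗ f₃)` -/
def qf : QuadraticForm ℝ (Fin 3 → ℝ) := Q3.comp Lmap

theorem qf_pos (hpsd : ∀ F, 0 ≤ Q3 F)
    (hpd : ∀ F : Matrix (Fin 3) (Fin 3) ℝ, Fᵀ = F → F ≠ 0 → 0 < Q3 F)
    (hskew : ∀ F : Matrix (Fin 3) (Fin 3) ℝ, Fᵀ = -F → Q3 F = 0)
    (d : Fin 3 → ℝ) (hd : d ≠ 0) : 0 < qf Q3 d := by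
  have e : qf Q3 d = Q3 ((2⁻¹ : ℝ) • (Lmap d + (Lmap d)ᵀ)) := by
    rw [qf, QuadraticMap.comp_apply]; exact Q_sym Q3 hpsd hskew _
  rw [e]
  set S := (2⁻¹ : ℝ) • (Lmap d + (Lmap d)ᵀ) with hS
  have hSsym : Sᵀ = S := by
    rw [hS]; simp [transpose_smul, transpose_add]; rw [add_comm]
  obtain ⟨i, hi⟩ : ∃ i, d i ≠ 0 := Function.ne_iff.mp hd
  have hSne : S ≠ 0 := by
    intro h0
    have hSe : S i 2 = 0 := by rw [h0]; rfl
    rw [hS] at hSe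
    simp only [Matrix.smul_apply, Matrix.add_apply, Matrix.transpose_apply] at hSe
    have h1 : Lmap d i 2 = d i := by simp [Lmap]
    have h2 : Lmap d 2 i = if i = 2 then d i else 0 := by
      by_cases h : i = (2 : Fin 3) <;> simp [Lmap, h]
    rw [h1, h2] at hSe
    rw [smul_eq_mul] at hSe
    by_cases h : i = (2 : Fin 3)
    · rw [if_pos h] at hSe
      apply hi
      have : (2⁻¹ : ℝ) * (d i + d i) = d i := by ring
      rw [this] at hSe; exact hSe
    · rw [if_neg h] at hSe
      apply hi
      have : (2⁻¹ : ℝ) * (d i + 0) = 2⁻¹ * d i := by ring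
      rw [this] at hSe
      field_simp at hSe; simpa using hSe
  exact hpd S hSsym hSne

/-- the polar bilinear form of `qf` -/
def Bq : LinearMap.BilinForm ℝ (Fin 3 → ℝ) := (qf Q3).polarBilin

theorem Bq_apply (a b : Fin 3 → ℝ) :
    Bq Q3 a b = QuadraticMap.polar Q3 (Lmap a) (Lmap b) := by
  simp [Bq, QuadraticMap.polarBilin_apply_apply, QuadraticMap.polar, qf,
    QuadraticMap.comp_apply, map_add]

theorem Bq_nondeg (hpsd : ∀ F, 0 ≤ Q3 F)
    (hpd : ∀ F : Matrix (Fin 3) (Fin 3) ℝ, Fᵀ = F → F ≠ 0 → 0 < Q3 F)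
    (hskew : ∀ F : Matrix (Fin 3) (Fin 3) ℝ, Fᵀ = -F → Q3 F = 0) :
    (Bq Q3).Nondegenerate := by
  refine (LinearMap.IsRefl.nondegenerate_iff_separatingLeft (fun a b h => by
    rw [Bq, QuadraticMap.polarBilin_apply_apply] at h ⊢
    rw [QuadraticMap.polar_comm]; exact h)).mpr ?_
  intro d hdz
  by_contra hd
  have hpos := qf_pos Q3 hpsd hpd hskew d hd
  have h2 := hdz d
  rw [Bq, QuadraticMap.polarBilin_apply_apply, QuadraticMap.polar_self] at h2
  have : (2 : ℕ) • qf Q3 d = 2 * qf Q3 d := by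
    simp [nsmul_eq_mul]
  rw [this] at h2
  linarith

/-- the linear minimizer `G ↦ d*(G)` -/
def dstar (hnd : (Bq Q3).Nondegenerate) :
    Matrix (Fin 2) (Fin 2) ℝ →ₗ[ℝ] (Fin 3 → ℝ) :=
  ((Bq Q3).toDual hnd).symm.toLinearMap ∘ₗ (-(Q3.polarBilin.compl₁₂ hatL Lmap))

theorem dstar_spec (hnd : (Bq Q3).Nondegenerate) (G : Matrix (Fin 2) (Fin 2) ℝ)
    (e : Fin 3 → ℝ) :
    Bq Q3 (dstar Q3 hnd G) e = -QuadraticMap.polar Q3 (hatL G) (Lmap e) := by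
  rw [dstar, LinearMap.comp_apply, LinearEquiv.coe_coe,
    LinearMap.BilinForm.apply_toDual_symm_apply]
  simp [LinearMap.compl₁₂_apply, QuadraticMap.polarBilin_apply_apply]

/-- the linear map `G ↦ Ĝ + d*(G) ⊗ f₃` -/
def Tmap (hnd : (Bq Q3).Nondegenerate) :
    Matrix (Fin 2) (Fin 2) ℝ →ₗ[ℝ] Matrix (Fin 3) (Fin 3) ℝ :=
  hatL + Lmap ∘ₗ dstar Q3 hnd

/-- the relaxed quadratic form -/
def Q2 (hnd : (Bq Q3).Nondegenerate) : QuadraticForm ℝ (Matrix (Fin 2) (Fin 2) ℝ) :=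
  Q3.comp (Tmap Q3 hnd)

theorem expand (hnd : (Bq Q3).Nondegenerate) (G : Matrix (Fin 2) (Fin 2) ℝ)
    (d : Fin 3 → ℝ) :
    Q3 (hatL G + Lmap d) = Q2 Q3 hnd G + qf Q3 (d - dstar Q3 hnd G) := by
  have hsplit : hatL G + Lmap d = Tmap Q3 hnd G + Lmap (d - dstar Q3 hnd G) := by
    simp only [Tmap, LinearMap.add_apply, LinearMap.comp_apply, map_sub]
    abel
  rw [hsplit]
  have e1 : Q3 (Tmap Q3 hnd G + Lmap (d - dstar Q3 hnd G)) =
      Q3 (Tmap Q3 hnd G) + Q3 (Lmap (d - dstar Q3 hnd G)) +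
        QuadraticMap.polar Q3 (Tmap Q3 hnd G) (Lmap (d - dstar Q3 hnd G)) := by
    simp [QuadraticMap.polar]
  have e2 : QuadraticMap.polar Q3 (Tmap Q3 hnd G) (Lmap (d - dstar Q3 hnd G)) = 0 := by
    set e := d - dstar Q3 hnd G with he
    have h1 : QuadraticMap.polar Q3 (Tmap Q3 hnd G) (Lmap e) =
        QuadraticMap.polar Q3 (hatL G) (Lmap e) +
          QuadraticMap.polar Q3 (Lmap (dstar Q3 hnd G)) (Lmap e) := by
      rw [Tmap]
      simp only [LinearMap.add_apply, LinearMap.comp_apply]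
      rw [QuadraticMap.polar_add_left]
    rw [h1, ← Bq_apply, dstar_spec]
    ring
  rw [e1, e2, add_zero]
  rfl

end

end Stmt18Aux

open Stmt18Aux in
/-- the relaxed form `Q₂(G) = min_{d∈ℝ³} Q₃(Ĝ + d⊗f₃)` of a quadratic
form `Q₃` (psd, positive definite on Sym(3), vanishing on Skew(3)) is again a
quadratic form, psd, positive definite on Sym(2), vanishing on Skew(2), and
`Q₃(F) ≥ Q₂(F̌)` for all `F`. -/
theorem stmt18 (Q3 : QuadraticForm ℝ (Matrix (Fin 3) (Fin 3) ℝ))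
    (hpsd : ∀ F, 0 ≤ Q3 F)
    (hpd : ∀ F : Matrix (Fin 3) (Fin 3) ℝ, Fᵀ = F → F ≠ 0 → 0 < Q3 F)
    (hskew : ∀ F : Matrix (Fin 3) (Fin 3) ℝ, Fᵀ = -F → Q3 F = 0)
    (hat : Matrix (Fin 2) (Fin 2) ℝ → Matrix (Fin 3) (Fin 3) ℝ)
    (hhat : ∀ G (i j : Fin 3), hat G i j =
      if hi : (i : ℕ) < 2 then (if hj : (j : ℕ) < 2 then G ⟨i, hi⟩ ⟨j, hj⟩ else 0) else 0)
    (check : Matrix (Fin 3) (Fin 3) ℝ → Matrix (Fin 2) (Fin 2) ℝ)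
    (hcheck : ∀ F (i j : Fin 2), check F i j = F (Fin.castSucc i) (Fin.castSucc j)) :
    ∃ Q2 : QuadraticForm ℝ (Matrix (Fin 2) (Fin 2) ℝ),
      (∀ G, IsLeast
        {v : ℝ | ∃ d : Fin 3 → ℝ, v = Q3 (hat G + Matrix.of fun i j => if j = 2 then d i else 0)}
        (Q2 G)) ∧
      (∀ G, 0 ≤ Q2 G) ∧
      (∀ G : Matrix (Fin 2) (Fin 2) ℝ, Gᵀ = G → G ≠ 0 → 0 < Q2 G) ∧
      (∀ G : Matrix (Fin 2) (Fin 2) ℝ, Gᵀ = -G → Q2 G = 0) ∧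
      (∀ F, Q2 (check F) ≤ Q3 F) := by
  classical
  have hhatL : ∀ G, hat G = hatL G := by
    intro G; ext i j; rw [hhat]; rfl
  have hLof : ∀ d : Fin 3 → ℝ,
      (Matrix.of fun i j => if j = 2 then d i else 0) = Lmap d := fun d => rfl
  have hnd := Bq_nondeg Q3 hpsd hpd hskew
  have hQ2 : ∀ G, Q2 Q3 hnd G = Q3 (Tmap Q3 hnd G) := fun G => rfl
  -- the IsLeast property
  have hleast : ∀ G, IsLeast
      {v : ℝ | ∃ d : Fin 3 → ℝ, v = Q3 (hat G + Matrix.of fun i j => if j = 2 then d i else 0)}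
      (Q2 Q3 hnd G) := by
    intro G
    constructor
    · refine ⟨dstar Q3 hnd G, ?_⟩
      rw [hhatL, hLof, expand Q3 hnd G]
      simp
    · rintro v ⟨d, rfl⟩
      rw [hhatL, hLof, expand Q3 hnd G]
      have h0 : 0 ≤ qf Q3 (d - dstar Q3 hnd G) := by
        rw [qf, QuadraticMap.comp_apply]; exact hpsd _
      linarith
  have hpsd2 : ∀ G, 0 ≤ Q2 Q3 hnd G := by
    intro G; rw [hQ2]; exact hpsd _
  refine ⟨Q2 Q3 hnd, hleast, hpsd2, ?_, ?_, ?_⟩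
  · -- positive definite on Sym(2)
    intro G hGsym hGne
    rw [hQ2]
    set X := Tmap Q3 hnd G with hX
    rw [Q_sym Q3 hpsd hskew X]
    set S := (2⁻¹ : ℝ) • (X + Xᵀ) with hS
    have hSsym : Sᵀ = S := by
      rw [hS]; simp [transpose_smul, transpose_add]; rw [add_comm]
    apply hpd S hSsym
    intro h0
    obtain ⟨i, j, hij⟩ : ∃ i j, G i j ≠ 0 := by
      by_contra h; push_neg at h; exact hGne (by ext i j; simp [h])
    have hi2 : ((Fin.castSucc i : Fin 3) : ℕ) < 2 := by simpa using i.isLt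
    have hj2 : ((Fin.castSucc j : Fin 3) : ℕ) < 2 := by simpa using j.isLt
    have hjne : (Fin.castSucc j : Fin 3) ≠ 2 := by
      intro h; have := congrArg Fin.val h; simp at this; omega
    have hine : (Fin.castSucc i : Fin 3) ≠ 2 := by
      intro h; have := congrArg Fin.val h; simp at this; omega
    have hhat1 : hatL G (Fin.castSucc i) (Fin.castSucc j) = G i j := by
      simp only [hatL, LinearMap.coe_mk, AddHom.coe_mk, Matrix.of_apply, hi2, hj2, dif_pos]
      congr 1 <;> exact Fin.ext (by simp)
    have hhat2 : hatL G (Fin.castSucc j) (Fin.castSucc i) = G j i := by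
      simp only [hatL, LinearMap.coe_mk, AddHom.coe_mk, Matrix.of_apply, hi2, hj2, dif_pos]
      congr 1 <;> exact Fin.ext (by simp)
    have hL1 : ∀ e : Fin 3 → ℝ, Lmap e (Fin.castSucc i) (Fin.castSucc j) = 0 := by
      intro e; simp [Lmap, hjne]
    have hL2 : ∀ e : Fin 3 → ℝ, Lmap e (Fin.castSucc j) (Fin.castSucc i) = 0 := by
      intro e; simp [Lmap, hine]
    have hXij : X (Fin.castSucc i) (Fin.castSucc j) = G i j := by
      rw [hX, Tmap]
      simp only [LinearMap.add_apply, LinearMap.comp_apply, Matrix.add_apply]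
      rw [hhat1, hL1]; ring
    have hXji : X (Fin.castSucc j) (Fin.castSucc i) = G i j := by
      rw [hX, Tmap]
      simp only [LinearMap.add_apply, LinearMap.comp_apply, Matrix.add_apply]
      rw [hhat2, hL2]
      have : G j i = G i j := by
        have := congrFun (congrFun hGsym i) j
        simpa using this
      rw [this]; ring
    have hSe : S (Fin.castSucc i) (Fin.castSucc j) = G i j := by
      rw [hS]
      simp only [Matrix.smul_apply, Matrix.add_apply, Matrix.transpose_apply, hXij, hXji,
        smul_eq_mul]
      ring
    have : S (Fin.castSucc i) (Fin.castSucc j) = 0 := by rw [h0]; rfl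
    rw [hSe] at this; exact hij this
  · -- vanishes on Skew(2)
    intro G hGskew
    have hskew3 : (hatL G)ᵀ = -(hatL G) := by
      ext i j
      simp only [Matrix.transpose_apply, Matrix.neg_apply, hatL, LinearMap.coe_mk,
        AddHom.coe_mk, Matrix.of_apply]
      by_cases h1 : (i : ℕ) < 2 <;> by_cases h2 : (j : ℕ) < 2 <;> simp [h1, h2]
      simpa using congrFun (congrFun hGskew ⟨i, h1⟩) ⟨j, h2⟩
    have hz : Q3 (hatL G) = 0 := hskew _ hskew3
    have hmem : (0 : ℝ) ∈
        {v : ℝ | ∃ d : Fin 3 → ℝ, v = Q3 (hat G + Matrix.of fun i j => if j = 2 then d i else 0)} := by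
      refine ⟨0, ?_⟩
      rw [hhatL, hLof, map_zero, add_zero, hz]
    have hle := (hleast G).2 hmem
    exact le_antisymm hle (hpsd2 G)
  · -- Q2 (check F) ≤ Q3 F
    intro F
    set d : Fin 3 → ℝ := ![F 0 2 + F 2 0, F 1 2 + F 2 1, F 2 2] with hdd
    have hmem : Q3 (hat (check F) + Matrix.of fun i j => if j = 2 then d i else 0) ∈
        {v : ℝ | ∃ e : Fin 3 → ℝ,
          v = Q3 (hat (check F) + Matrix.of fun i j => if j = 2 then e i else 0)} := ⟨d, rfl⟩
    have hle := (hleast (check F)).2 hmem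
    have hXF : Q3 (hat (check F) + Matrix.of fun i j => if j = 2 then d i else 0) = Q3 F := by
      rw [hhatL, hLof]
      rw [Q_sym Q3 hpsd hskew (hatL (check F) + Lmap d), Q_sym Q3 hpsd hskew F]
      congr 2
      ext i j
      simp only [Matrix.add_apply, Matrix.transpose_apply]
      fin_cases i <;> fin_cases j <;>
        simp [hatL, Lmap, hcheck, hdd, Matrix.of_apply] <;> ring
    rw [hXF] at hle
    exact hle
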